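/- Let R be confluent and let B be a set of normal forms closed under R-equivalence in the sense that no element of B has an R-successor. Then a state σ belongs to μX.(⟨R⟩(X) ∪ B) if and only if there is a finite reduction from σ to some element of B; moreover, if σ ∈ μX.(⟨R⟩(X) ∪ B) and σ R* τ, then τ ∈ μX.(⟨R⟩(X) ∪ B). -/
import Mathlib


def diamHom {S : Type*} (R : S → S → Prop) : Set S →o Set S :=
  ⟨fun X => {σ | ∃ σ', R σ σ' ∧ σ' ∈ X}, by
    intro X Y h σ ⟨σ', hR, hm⟩
    exact ⟨σ', hR, h hm⟩⟩

def lfpDiam {S : Type*} (R : S → S → Prop) (B : Set S) : Set S :=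
  OrderHom.lfp ⟨fun X => diamHom R X ∪ B,
    fun _ _ h => Set.union_subset_union ((diamHom R).mono h) le_rfl⟩

/-- For confluent R and a set B of normal forms: membership in the least fixpoint
is reachability of B, and the fixpoint is closed under reduction. -/
theorem lfp_confluent_char {S : Type*} (R : S → S → Prop) (B : Set S)
    (hconf : ∀ σ σ₁ σ₂, Relation.ReflTransGen R σ σ₁ → Relation.ReflTransGen R σ σ₂ →
      ∃ σ', Relation.ReflTransGen R σ₁ σ' ∧ Relation.ReflTransGen R σ₂ σ')
    (hB : ∀ b ∈ B, ¬ ∃ τ, R b τ) :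
    (∀ σ, σ ∈ lfpDiam R B ↔ ∃ b ∈ B, Relation.ReflTransGen R σ b) ∧
    (∀ σ τ, σ ∈ lfpDiam R B → Relation.ReflTransGen R σ τ → τ ∈ lfpDiam R B) := by
  set f : Set S →o Set S := ⟨fun X => diamHom R X ∪ B,
    fun _ _ h => Set.union_subset_union ((diamHom R).mono h) le_rfl⟩ with hf
  have hfix : f (OrderHom.lfp f) = OrderHom.lfp f := OrderHom.map_lfp f
  have hlfp : lfpDiam R B = OrderHom.lfp f := rfl
  -- backward: reachability implies membership
  have hback : ∀ σ, (∃ b ∈ B, Relation.ReflTransGen R σ b) → σ ∈ lfpDiam R B := by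
    rintro σ ⟨b, hb, hr⟩
    rw [hlfp]
    induction hr using Relation.ReflTransGen.head_induction_on with
    | refl => rw [← hfix]; exact Or.inr hb
    | head hR _ ih => rw [← hfix]; exact Or.inl ⟨_, hR, ih⟩
  -- forward: membership implies reachability, by lfp induction
  have hfwd : ∀ σ, σ ∈ lfpDiam R B → ∃ b ∈ B, Relation.ReflTransGen R σ b := by
    have : OrderHom.lfp f ≤ {σ | ∃ b ∈ B, Relation.ReflTransGen R σ b} := by
      apply OrderHom.lfp_le
      rintro σ (⟨σ', hR, ⟨b, hb, hr⟩⟩ | hb)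
      · exact ⟨b, hb, Relation.ReflTransGen.head hR hr⟩
      · exact ⟨σ, hb, Relation.ReflTransGen.refl⟩
    exact fun σ h => this h
  have iff1 : ∀ σ, σ ∈ lfpDiam R B ↔ ∃ b ∈ B, Relation.ReflTransGen R σ b :=
    fun σ => ⟨hfwd σ, hback σ⟩
  refine ⟨iff1, ?_⟩
  intro σ τ hσ hστ
  obtain ⟨b, hb, hσb⟩ := hfwd σ hσ
  obtain ⟨c, hbc, hτc⟩ := hconf σ b τ hσb hστ
  have : b = c := by
    cases hbc.cases_head with
    | inl h => exact h
    | inr h => exact absurd ⟨_, h.choose_spec.1⟩ (hB b hb)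
  exact hback τ ⟨b, hb, this ▸ hτc⟩
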